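/- Discrete power balance for the structure-preserving discretization of the inviscid Burgers' equation: if v_d(t,·) ∈ H¹₀(0,1) depends C¹ on t, e_d(t,·) ∈ H¹₀(0,1), and for all test functions φ ∈ V_h ⊂ H¹₀(0,1) one has ∫₀¹ ∂ₜv_d φ = ∫₀¹ e_d φ' and ∫₀¹ e_d φ = ∫₀¹ (v_d²/2) φ, with e_d ∈ V_h and v_d²/2 ∈ V_h-testable, then d/dt ∫₀¹ v_d³/6 dx = 0. -/

import Mathlib

set_option maxHeartbeats 1000000

open Set

section Aux

variable (Vh : Submodule ℝ (ℝ → ℝ)) [FiniteDimensional ℝ Vh]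

/-- evaluation functional -/
noncomputable def evalVh (x : ℝ) : Module.Dual ℝ Vh :=
  (LinearMap.proj x).comp Vh.subtype

lemma span_evalVh_top :
    Submodule.span ℝ (Set.range (evalVh Vh)) = ⊤ := by
  set U : Subspace ℝ (Module.Dual ℝ Vh) := Submodule.span ℝ (Set.range (evalVh Vh))
  have hco : U.dualCoannihilator = ⊥ := by
    rw [eq_bot_iff]
    intro v hv
    rw [Submodule.mem_dualCoannihilator] at hv
    have : v = 0 := by
      ext x
      exact hv _ (Submodule.subset_span ⟨x, rfl⟩)
    simp [this]
  have := Subspace.dualCoannihilator_dualAnnihilator_eq (W := U)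
  rw [hco, Submodule.dualAnnihilator_bot] at this
  exact this.symm

lemma hasDerivAt_dual
    (vd vdt : ℝ → ℝ → ℝ)
    (hvd : ∀ t, vd t ∈ Vh) (hvdt : ∀ t, vdt t ∈ Vh)
    (hdt : ∀ t x, HasDerivAt (fun s => vd s x) (vdt t x) t)
    (t : ℝ) (ℓ : Module.Dual ℝ Vh) :
    HasDerivAt (fun s => ℓ ⟨vd s, hvd s⟩) (ℓ ⟨vdt t, hvdt t⟩) t := by
  have hmem : ℓ ∈ Submodule.span ℝ (Set.range (evalVh Vh)) := by
    rw [span_evalVh_top]; trivial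
  induction hmem using Submodule.span_induction with
  | mem ℓ h =>
    obtain ⟨x, rfl⟩ := h
    exact hdt t x
  | zero => simpa using hasDerivAt_const t (0:ℝ)
  | add ℓ₁ ℓ₂ h₁ h₂ ih₁ ih₂ => simpa using ih₁.fun_add ih₂
  | smul a ℓ h ih => simpa using ih.const_mul a

lemma expand_cubic {n : ℕ} (b : Fin n → ℝ → ℝ)
    (hb : ∀ i, ContinuousOn (b i) (Icc (0:ℝ) 1)) (f g h : Fin n → ℝ) :
    ∫ x in (0:ℝ)..1, (∑ i, f i * b i x) * (∑ j, g j * b j x) * (∑ k, h k * b k x)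
      = ∑ i, ∑ j, ∑ k, (f i * g j * h k) * ∫ x in (0:ℝ)..1, b i x * b j x * b k x := by
  have hint : ∀ i j k : Fin n, IntervalIntegrable
      (fun x => b i x * b j x * b k x) MeasureTheory.volume 0 1 := by
    intro i j k
    apply ContinuousOn.intervalIntegrable
    rw [uIcc_of_le (by norm_num : (0:ℝ) ≤ 1)]
    exact ((hb i).mul (hb j)).mul (hb k)
  have hint2 : ∀ i j k : Fin n, IntervalIntegrable
      (fun x => (f i * g j * h k) * (b i x * b j x * b k x)) MeasureTheory.volume 0 1 :=
    fun i j k => (hint i j k).const_mul _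
  have hint3 : ∀ i j : Fin n, IntervalIntegrable
      (fun x => ∑ k, (f i * g j * h k) * (b i x * b j x * b k x)) MeasureTheory.volume 0 1 := by
    intro i j
    apply ContinuousOn.intervalIntegrable
    rw [uIcc_of_le (by norm_num : (0:ℝ) ≤ 1)]
    exact continuousOn_finset_sum _ fun k _ =>
      (continuousOn_const.mul (((hb i).mul (hb j)).mul (hb k)))
  have hint4 : ∀ i : Fin n, IntervalIntegrable
      (fun x => ∑ j, ∑ k, (f i * g j * h k) * (b i x * b j x * b k x))
      MeasureTheory.volume 0 1 := by
    intro i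
    apply ContinuousOn.intervalIntegrable
    rw [uIcc_of_le (by norm_num : (0:ℝ) ≤ 1)]
    exact continuousOn_finset_sum _ fun j _ => continuousOn_finset_sum _ fun k _ =>
      (continuousOn_const.mul (((hb i).mul (hb j)).mul (hb k)))
  have hpt : ∀ x : ℝ, (∑ i, f i * b i x) * (∑ j, g j * b j x) * (∑ k, h k * b k x)
      = ∑ i, ∑ j, ∑ k, (f i * g j * h k) * (b i x * b j x * b k x) := by
    intro x
    rw [Finset.sum_mul_sum, Finset.sum_mul]
    refine Finset.sum_congr rfl fun i _ => ?_
    rw [Finset.sum_mul]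
    refine Finset.sum_congr rfl fun j _ => ?_
    rw [Finset.mul_sum]
    refine Finset.sum_congr rfl fun k _ => ?_
    ring
  have e1 : (∫ x in (0:ℝ)..1, ∑ i, ∑ j, ∑ k, (f i * g j * h k) * (b i x * b j x * b k x))
      = ∑ i, ∫ x in (0:ℝ)..1, ∑ j, ∑ k, (f i * g j * h k) * (b i x * b j x * b k x) :=
    intervalIntegral.integral_finset_sum (fun i _ => hint4 i)
  have e2 : ∀ i : Fin n, (∫ x in (0:ℝ)..1, ∑ j, ∑ k, (f i * g j * h k) * (b i x * b j x * b k x))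
      = ∑ j, ∫ x in (0:ℝ)..1, ∑ k, (f i * g j * h k) * (b i x * b j x * b k x) :=
    fun i => intervalIntegral.integral_finset_sum (fun j _ => hint3 i j)
  have e3 : ∀ i j : Fin n, (∫ x in (0:ℝ)..1, ∑ k, (f i * g j * h k) * (b i x * b j x * b k x))
      = ∑ k, ∫ x in (0:ℝ)..1, (f i * g j * h k) * (b i x * b j x * b k x) :=
    fun i j => intervalIntegral.integral_finset_sum (fun k _ => hint2 i j k)
  simp only [hpt]
  rw [e1]
  refine Finset.sum_congr rfl fun i _ => ?_
  rw [e2 i]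
  refine Finset.sum_congr rfl fun j _ => ?_
  rw [e3 i j]
  refine Finset.sum_congr rfl fun k _ => ?_
  exact intervalIntegral.integral_const_mul _ _

lemma int_self_deriv_zero (g : ℝ → ℝ)
    (hg : DifferentiableOn ℝ g (Icc (0:ℝ) 1)) (h0 : g 0 = 0) (h1 : g 1 = 0) :
    ∫ x in (0:ℝ)..1, g x * deriv g x = 0 := by
  by_cases hint : IntervalIntegrable (fun x => g x * deriv g x) MeasureTheory.volume 0 1
  · have hcont : ContinuousOn (fun x => g x ^ 2 / 2) (Icc (0:ℝ) 1) :=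
      (hg.continuousOn.pow 2).div_const 2
    have hder : ∀ x ∈ Ioo (0:ℝ) 1,
        HasDerivWithinAt (fun x => g x ^ 2 / 2) (g x * deriv g x) (Ioi x) x := by
      intro x hx
      have hmem : Icc (0:ℝ) 1 ∈ nhds x := Icc_mem_nhds hx.1 hx.2
      have hdx : DifferentiableAt ℝ g x :=
        (hg x (Ioo_subset_Icc_self hx)).differentiableAt hmem
      have : HasDerivAt (fun x => g x ^ 2 / 2) (g x * deriv g x) x := by
        have := (hdx.hasDerivAt.fun_pow 2).div_const 2
        refine this.congr_deriv ?_
        simp; ring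
      exact this.hasDerivWithinAt
    have := intervalIntegral.integral_eq_sub_of_hasDeriv_right_of_le
      (by norm_num : (0:ℝ) ≤ 1) hcont hder hint
    rw [this, h0, h1]
    norm_num
  · exact intervalIntegral.integral_undef hint

end Aux

set_option maxHeartbeats 1000000 in
/-- Discrete power balance for the structure-preserving Galerkin
discretization of the inviscid Burgers' equation with homogeneous boundary
conditions: the discrete Hamiltonian `∫₀¹ v_d³/6` is conserved. -/
theorem discrete_power_balance_inviscid
    (Vh : Submodule ℝ (ℝ → ℝ)) [FiniteDimensional ℝ Vh]
    (hbc : ∀ φ ∈ Vh, φ 0 = 0 ∧ φ 1 = 0)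
    (hdiff : ∀ φ ∈ Vh, DifferentiableOn ℝ φ (Icc (0:ℝ) 1))
    (vd ed vdt : ℝ → ℝ → ℝ)
    (hvd : ∀ t, vd t ∈ Vh) (hed : ∀ t, ed t ∈ Vh) (hvdt : ∀ t, vdt t ∈ Vh)
    (hdt : ∀ t x, HasDerivAt (fun s => vd s x) (vdt t x) t)
    (hdyn : ∀ t, ∀ φ ∈ Vh,
      ∫ x in (0:ℝ)..1, vdt t x * φ x = ∫ x in (0:ℝ)..1, ed t x * deriv φ x)
    (hconst : ∀ t, ∀ φ ∈ Vh,
      ∫ x in (0:ℝ)..1, ed t x * φ x = ∫ x in (0:ℝ)..1, (vd t x)^2 / 2 * φ x)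
    (t : ℝ) :
    HasDerivAt (fun s => ∫ x in (0:ℝ)..1, (vd s x)^3 / 6) 0 t := by
  classical
  set n := Module.finrank ℝ Vh with hn
  set B := Module.finBasis ℝ Vh with hB
  set bb : Fin n → ℝ → ℝ := fun i => (B i : ℝ → ℝ) with hbb
  have hbmem : ∀ i, (bb i) ∈ Vh := fun i => (B i).2
  have hbcont : ∀ i, ContinuousOn (bb i) (Icc (0:ℝ) 1) :=
    fun i => (hdiff _ (hbmem i)).continuousOn
  set c : ℝ → Fin n → ℝ := fun s i => B.repr ⟨vd s, hvd s⟩ i with hcdef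
  set d : Fin n → ℝ := fun i => B.repr ⟨vdt t, hvdt t⟩ i with hddef
  have hc : ∀ i, HasDerivAt (fun s => c s i) (d i) t := by
    intro i
    have := hasDerivAt_dual Vh vd vdt hvd hvdt hdt t (B.coord i)
    simpa [Module.Basis.coord_apply, hcdef, hddef] using this
  have hrepr : ∀ s x, vd s x = ∑ i, c s i * bb i x := by
    intro s x
    have h1 := B.sum_repr ⟨vd s, hvd s⟩
    have h2 := congrArg (fun v : Vh => (v : ℝ → ℝ) x) h1
    simp only at h2
    rw [← h2]
    push_cast [Submodule.coe_sum]
    simp [Finset.sum_apply, smul_eq_mul, hcdef, hbb]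
    rfl
  have hreprt : ∀ x, vdt t x = ∑ i, d i * bb i x := by
    intro x
    have h1 := B.sum_repr ⟨vdt t, hvdt t⟩
    have h2 := congrArg (fun v : Vh => (v : ℝ → ℝ) x) h1
    simp only at h2
    rw [← h2]
    push_cast [Submodule.coe_sum]
    simp [Finset.sum_apply, smul_eq_mul, hddef, hbb]
    rfl
  -- the integral as a cubic polynomial of the coordinates
  have hF : ∀ s, (∫ x in (0:ℝ)..1, (vd s x)^3/6)
      = (∑ i, ∑ j, ∑ k, (c s i * c s j * c s k) *
          ∫ x in (0:ℝ)..1, bb i x * bb j x * bb k x)/6 := by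
    intro s
    rw [intervalIntegral.integral_div]
    congr 1
    have hfe : (fun x => (vd s x)^3)
        = fun x => (∑ i, c s i * bb i x) * (∑ j, c s j * bb j x) * (∑ k, c s k * bb k x) :=
      funext fun x => by rw [hrepr s x]; ring
    rw [hfe, expand_cubic bb hbcont (c s) (c s) (c s)]
  have hFun : (fun s => ∫ x in (0:ℝ)..1, (vd s x)^3/6)
      = fun s => (∑ i, ∑ j, ∑ k, (c s i * c s j * c s k) *
          ∫ x in (0:ℝ)..1, bb i x * bb j x * bb k x)/6 := funext hF
  rw [hFun]
  have hD : HasDerivAt (fun s => (∑ i, ∑ j, ∑ k, (c s i * c s j * c s k) *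
          ∫ x in (0:ℝ)..1, bb i x * bb j x * bb k x)/6)
      ((∑ i, ∑ j, ∑ k, ((d i * c t j + c t i * d j) * c t k + c t i * c t j * d k) *
          ∫ x in (0:ℝ)..1, bb i x * bb j x * bb k x)/6) t := by
    apply HasDerivAt.div_const
    apply HasDerivAt.fun_sum
    intro i _
    apply HasDerivAt.fun_sum
    intro j _
    apply HasDerivAt.fun_sum
    intro k _
    exact (((hc i).mul (hc j)).mul (hc k)).mul_const _
  -- now show the derivative value is zero
  set S : ℝ := ∫ x in (0:ℝ)..1, vdt t x * vd t x * vd t x with hSdef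
  have hT1 : (∑ i, ∑ j, ∑ k, (d i * c t j * c t k) *
      ∫ x in (0:ℝ)..1, bb i x * bb j x * bb k x) = S := by
    rw [← expand_cubic bb hbcont d (c t) (c t), hSdef]
    congr 1
    funext x
    rw [hrepr t x, hreprt x]
  have hT2 : (∑ i, ∑ j, ∑ k, (c t i * d j * c t k) *
      ∫ x in (0:ℝ)..1, bb i x * bb j x * bb k x) = S := by
    rw [← expand_cubic bb hbcont (c t) d (c t), hSdef]
    congr 1
    funext x
    rw [hrepr t x, hreprt x]
    ring
  have hT3 : (∑ i, ∑ j, ∑ k, (c t i * c t j * d k) *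
      ∫ x in (0:ℝ)..1, bb i x * bb j x * bb k x) = S := by
    rw [← expand_cubic bb hbcont (c t) (c t) d, hSdef]
    congr 1
    funext x
    rw [hrepr t x, hreprt x]
    ring
  have hsplit : (∑ i, ∑ j, ∑ k, ((d i * c t j + c t i * d j) * c t k + c t i * c t j * d k) *
      ∫ x in (0:ℝ)..1, bb i x * bb j x * bb k x)
      = (∑ i, ∑ j, ∑ k, (d i * c t j * c t k) * ∫ x in (0:ℝ)..1, bb i x * bb j x * bb k x)
      + (∑ i, ∑ j, ∑ k, (c t i * d j * c t k) * ∫ x in (0:ℝ)..1, bb i x * bb j x * bb k x)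
      + (∑ i, ∑ j, ∑ k, (c t i * c t j * d k) * ∫ x in (0:ℝ)..1, bb i x * bb j x * bb k x) := by
    rw [← Finset.sum_add_distrib, ← Finset.sum_add_distrib]
    refine Finset.sum_congr rfl fun i _ => ?_
    rw [← Finset.sum_add_distrib, ← Finset.sum_add_distrib]
    refine Finset.sum_congr rfl fun j _ => ?_
    rw [← Finset.sum_add_distrib, ← Finset.sum_add_distrib]
    refine Finset.sum_congr rfl fun k _ => ?_
    ring
  have hSzero : S = 0 := by
    have h2 : (∫ x in (0:ℝ)..1, ed t x * vdt t x)
        = ∫ x in (0:ℝ)..1, (vd t x)^2/2 * vdt t x := hconst t (vdt t) (hvdt t)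
    have h3 : (fun x => (vd t x)^2/2 * vdt t x)
        = fun x => (vdt t x * vd t x * vd t x)/2 := funext fun x => by ring
    have h4 : (fun x => ed t x * vdt t x)
        = fun x => vdt t x * ed t x := funext fun x => mul_comm _ _
    rw [h3, intervalIntegral.integral_div, h4] at h2
    -- h2 : ∫ vdt * ed = S / 2
    have h6 : (∫ x in (0:ℝ)..1, vdt t x * ed t x)
        = ∫ x in (0:ℝ)..1, ed t x * deriv (ed t) x := hdyn t (ed t) (hed t)
    have h7 : (∫ x in (0:ℝ)..1, ed t x * deriv (ed t) x) = 0 :=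
      int_self_deriv_zero (ed t) (hdiff _ (hed t)) (hbc _ (hed t)).1 (hbc _ (hed t)).2
    have : S / 2 = 0 := by rw [← h2, h6, h7]
    linarith
  have hval : ((∑ i, ∑ j, ∑ k, ((d i * c t j + c t i * d j) * c t k + c t i * c t j * d k) *
      ∫ x in (0:ℝ)..1, bb i x * bb j x * bb k x)/6 : ℝ) = 0 := by
    rw [hsplit, hT1, hT2, hT3, hSzero]
    ring
  rw [hval] at hD
  exact hD
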